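/- Let G = (V, E) be a directed graph with positive edge weights in which all pairwise shortest-path distances d(·, v) to a fixed vertex v from distinct vertices are distinct. If u is the i-th nearest neighbor of v (i.e., exactly i - 1 vertices c satisfy d(c, v) < d(u, v)), then for every vertex w on a shortest path π from u to v, the vertex u is among the first i nearest neighbors of w; that is, at most i - 1 vertices c satisfy d(c, w) < d(u, w). -/

import Mathlib

open ENNReal

/-- Total weight of the walk starting at `a` and following the vertex list `l`. -/
noncomputable def listCost {V : Type*} (w : V → V → ℝ≥0∞) : V → List V → ℝ≥0∞
  | _, [] => 0
  | a, b :: l => w a b + listCost w b l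

/-- Shortest-path distance from `u` to `v` in the weighted digraph with
weight function `w` (weight `⊤` means no edge). -/
noncomputable def spDist {V : Type*} (w : V → V → ℝ≥0∞) (u v : V) : ℝ≥0∞ :=
  ⨅ l : {l : List V // (u :: l).getLast (List.cons_ne_nil u l) = v},
    listCost w u l.1

lemma listCost_append {V : Type*} (w : V → V → ℝ≥0∞) :
    ∀ (l₁ : List V) (a : V) (l₂ : List V),
      listCost w a (l₁ ++ l₂) =
        listCost w a l₁ + listCost w ((a :: l₁).getLast (List.cons_ne_nil a l₁)) l₂
  | [], a, l₂ => by simp [listCost]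
  | b :: l, a, l₂ => by
    simp only [List.cons_append, listCost]
    rw [listCost_append w l b l₂, List.getLast_cons (List.cons_ne_nil b l), add_assoc]

lemma spDist_self {V : Type*} (w : V → V → ℝ≥0∞) (a : V) : spDist w a a = 0 := by
  refine le_antisymm ?_ (zero_le)
  have := iInf_le (fun l : {l : List V // (a :: l).getLast (List.cons_ne_nil a l) = a} =>
    listCost w a l.1) ⟨[], by simp⟩
  simpa [listCost, spDist] using this

lemma spDist_triangle {V : Type*} (w : V → V → ℝ≥0∞) (a b c : V) :
    spDist w a c ≤ spDist w a b + spDist w b c := by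
  simp only [spDist]
  rw [ENNReal.iInf_add]
  refine le_iInf fun l₁ => ?_
  rw [ENNReal.add_iInf]
  refine le_iInf fun l₂ => ?_
  have hend : ((a :: (l₁.1 ++ l₂.1)).getLast (List.cons_ne_nil _ _)) = c := by
    have h := l₂.2
    rcases l₂ with ⟨l₂, hl₂⟩
    cases l₂ with
    | nil =>
      simp only [List.getLast_singleton] at hl₂
      simp only [List.append_nil]
      subst hl₂; exact l₁.2
    | cons d l =>
      have : a :: (l₁.1 ++ d :: l) = (a :: l₁.1) ++ d :: l := by simp
      rw [List.getLast_congr _ (by simp) this, List.getLast_append_right (List.cons_ne_nil d l)]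
      simpa using hl₂
  have key : spDist w a c ≤ listCost w a (l₁.1 ++ l₂.1) :=
    iInf_le (fun l : {l : List V // (a :: l).getLast (List.cons_ne_nil a l) = c} =>
      listCost w a l.1) ⟨l₁.1 ++ l₂.1, hend⟩
  refine key.trans ?_
  rw [listCost_append, l₁.2]

theorem stmt_4 {V : Type*} [Fintype V] [DecidableEq V]
    (w : V → V → ℝ≥0∞) (hpos : ∀ a b, 0 < w a b)
    (v : V) (hdist : Function.Injective fun x => spDist w x v)
    (u : V) (i : ℕ) (hi : 1 ≤ i)
    (hu : (Finset.univ.filter fun c => spDist w c v < spDist w u v).card = i - 1) :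
    ∀ x : V, spDist w u x + spDist w x v = spDist w u v →
      (Finset.univ.filter fun c => spDist w c x < spDist w u x).card ≤ i - 1 := by
  intro x hx
  by_cases htop : spDist w x v = ⊤
  · have huv : spDist w u v = ⊤ := by
      rw [← hx, htop, add_top]
    have hux : u = x := hdist (by simp [huv, htop])
    subst hux
    rw [spDist_self]
    simp
  · rw [← hu]
    apply Finset.card_le_card
    intro c hc
    simp only [Finset.mem_filter, Finset.mem_univ, true_and] at hc ⊢
    calc spDist w c v ≤ spDist w c x + spDist w x v := spDist_triangle w c x v
      _ < spDist w u x + spDist w x v := ENNReal.add_lt_add_right htop hc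
      _ = spDist w u v := hx
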